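/- A set of desirable options D ⊆ V is Archimedean if and only if there is a non-empty set L of positive bounded linear functionals such that D = ∩_{f ∈ L} {x : f(x) > 0}; the largest such set is V*_{≻0}(D), the set of all positive bounded linear functionals strictly positive on D. -/

import Mathlib

/-- Coherence of a set of desirable options with respect to the strict ordering `gt`. -/
def CoherentD {V : Type*} [AddCommGroup V] [Module ℝ V] (gt : V → V → Prop)
    (D : Set V) : Prop :=
  (0 : V) ∉ D ∧
  (∀ x ∈ D, ∀ y ∈ D, ∀ l m : ℝ, 0 ≤ l → 0 ≤ m → 0 < l + m → l • x + m • y ∈ D) ∧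
  {x : V | gt x 0} ⊆ D

/-- Archimedeanity of a set of desirable options: coherence plus separation by bounded
superlinear functionals strictly positive on `D`. -/
def ArchimedeanD {V : Type*} [NormedAddCommGroup V] [NormedSpace ℝ V]
    (gt : V → V → Prop) (D : Set V) : Prop :=
  CoherentD gt D ∧
  ∀ x ∉ D, ∃ u : V → ℝ,
    (∀ y z : V, u y + u z ≤ u (y + z)) ∧
    (∀ (y : V) (c : ℝ), 0 ≤ c → u (c • y) = c * u y) ∧
    (∃ K : ℝ, ∀ y : V, |u y| ≤ K * ‖y‖) ∧
    (∀ y ∈ D, 0 < u y) ∧ u x ≤ 0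

lemma exists_clm_ge_superlinear {V : Type*} [NormedAddCommGroup V] [NormedSpace ℝ V]
    (u : V → ℝ) (hadd : ∀ y z : V, u y + u z ≤ u (y + z))
    (hhom : ∀ (y : V) (c : ℝ), 0 ≤ c → u (c • y) = c * u y)
    (K : ℝ) (hK : ∀ y : V, |u y| ≤ K * ‖y‖) (x : V) :
    ∃ f : V →L[ℝ] ℝ, (∀ y : V, u y ≤ f y) ∧ f x = u x := by
  have hu0 : u 0 = 0 := by
    have := hhom 0 0 le_rfl
    simpa using this
  set p : V → ℝ := fun y => -u (-y) with hp
  have hsum : ∀ y : V, u y + u (-y) ≤ 0 := by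
    intro y
    have := hadd y (-y)
    simpa [hu0] using this
  have p_hom : ∀ c : ℝ, 0 < c → ∀ y : V, p (c • y) = c * p y := by
    intro c hc y
    simp only [hp]
    rw [← smul_neg, hhom _ c hc.le]
    ring
  have p_add : ∀ y z : V, p (y + z) ≤ p y + p z := by
    intro y z
    simp only [hp]
    have := hadd (-y) (-z)
    have h2 : -y + -z = -(y + z) := by abel
    rw [h2] at this
    linarith
  have H : ∀ c : ℝ, c • x = 0 → c • u x = 0 := by
    intro c hc
    rcases smul_eq_zero.1 hc with h | h
    · simp [h]
    · simp [h, hu0]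
  set pm := LinearPMap.mkSpanSingleton' (σ := RingHom.id ℝ) x (u x) H with hpm
  have hf : ∀ z : pm.domain, pm z ≤ p z := by
    rintro ⟨z, hz⟩
    obtain ⟨c, hc⟩ := Submodule.mem_span_singleton.1 hz
    have hzz : (⟨z, hz⟩ : pm.domain) = ⟨c • x, hc ▸ hz⟩ := by
      exact Subtype.ext hc.symm
    rw [hzz, LinearPMap.mkSpanSingleton'_apply]
    rcases le_or_gt 0 c with h0 | h0
    · have : p (c • x) = -(c * u (-x)) := by
        simp only [hp, ← smul_neg, hhom _ c h0]
      rw [this]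
      have := mul_le_mul_of_nonneg_left (hsum x) h0
      simp only [smul_eq_mul, RingHom.id_apply]
      nlinarith
    · have : p (c • x) = c * u x := by
        have h1 : -(c • x) = (-c) • x := by module
        simp only [hp, h1, hhom _ (-c) (by linarith)]
        ring
      rw [this]; simp [smul_eq_mul]
  obtain ⟨g, hg_ext, hg_le⟩ := exists_extension_of_le_sublinear pm p p_hom p_add hf
  have hxmem : x ∈ pm.domain := Submodule.mem_span_singleton_self x
  have hgx : g x = u x := by
    have := hg_ext ⟨x, hxmem⟩
    rwa [LinearPMap.mkSpanSingleton'_apply_self] at this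
  have hlow : ∀ y : V, u y ≤ g y := by
    intro y
    have h1 := hg_le (-y)
    have : p (-y) = -u y := by simp [hp]
    rw [this, map_neg] at h1
    linarith
  have hbound : ∀ y : V, ‖g y‖ ≤ K * ‖y‖ := by
    intro y
    rw [Real.norm_eq_abs, abs_le]
    constructor
    · have h1 := hlow y
      have h2 := (abs_le.1 (hK y)).1
      linarith
    · have h1 := hg_le y
      have h3 := hK (-y)
      rw [norm_neg] at h3
      calc g y ≤ p y := h1
        _ ≤ |u (-y)| := by simp only [hp]; exact neg_le_abs _
        _ ≤ K * ‖y‖ := h3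
  refine ⟨g.mkContinuous K hbound, ?_, ?_⟩
  · intro y; exact hlow y
  · exact hgx

/-- From Archimedeanity, for any `x ∉ D` there is a continuous linear functional that is
strictly positive on the positive cone and on `D`, and nonpositive at `x`. -/
lemma exists_sep_clm {V : Type*} [NormedAddCommGroup V] [NormedSpace ℝ V]
    {gt : V → V → Prop} {D : Set V} (hA : ArchimedeanD gt D) {x : V} (hx : x ∉ D) :
    ∃ f : V →L[ℝ] ℝ, (∀ y : V, gt y 0 → 0 < f y) ∧ (∀ y ∈ D, 0 < f y) ∧ f x ≤ 0 := by
  obtain ⟨u, hadd, hhom, ⟨K, hK⟩, hpos, hux⟩ := hA.2 x hx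
  obtain ⟨f, hge, hfx⟩ := exists_clm_ge_superlinear u hadd hhom K hK x
  have hD : ∀ y ∈ D, 0 < f y := fun y hy => lt_of_lt_of_le (hpos y hy) (hge y)
  exact ⟨f, fun y hy => hD y (hA.1.2.2 hy), hD, hfx ▸ hux⟩

theorem stmt17 {V : Type*} [NormedAddCommGroup V] [NormedSpace ℝ V] [CompleteSpace V]
    (gt : V → V → Prop)
    (hirr : ∀ x : V, ¬ gt x x)
    (htrans : ∀ x y z : V, gt x y → gt y z → gt x z)
    (haddc : ∀ x y z : V, gt x y → gt (x + z) (y + z))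
    (hsmulc : ∀ (x y : V) (c : ℝ), 0 < c → gt x y → gt (c • x) (c • y))
    (hint : (interior {x : V | gt x 0}).Nonempty)
    (hdual : ∃ f : V →L[ℝ] ℝ, ∀ x : V, gt x 0 → 0 < f x)
    (D : Set V) :
    (ArchimedeanD gt D ↔
      ∃ L : Set (V →L[ℝ] ℝ), L.Nonempty ∧ (∀ f ∈ L, ∀ x : V, gt x 0 → 0 < f x) ∧
        D = ⋂ f ∈ L, {x : V | 0 < f x}) ∧
    (ArchimedeanD gt D →
      (D = ⋂ f ∈ {f : V →L[ℝ] ℝ | (∀ x : V, gt x 0 → 0 < f x) ∧ ∀ x ∈ D, 0 < f x},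
        {x : V | 0 < f x}) ∧
      ∀ L : Set (V →L[ℝ] ℝ), L.Nonempty → (∀ f ∈ L, ∀ x : V, gt x 0 → 0 < f x) →
        D = ⋂ f ∈ L, {x : V | 0 < f x} →
        L ⊆ {f : V →L[ℝ] ℝ | (∀ x : V, gt x 0 → 0 < f x) ∧ ∀ x ∈ D, 0 < f x}) := by
  set S : Set (V →L[ℝ] ℝ) :=
    {f : V →L[ℝ] ℝ | (∀ x : V, gt x 0 → 0 < f x) ∧ ∀ x ∈ D, 0 < f x} with hS
  -- If Archimedean, then D is the intersection over S, and S is nonempty.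
  have hmain : ArchimedeanD gt D → S.Nonempty ∧ D = ⋂ f ∈ S, {x : V | 0 < f x} := by
    intro hA
    constructor
    · obtain ⟨f, h1, h2, _⟩ := exists_sep_clm hA hA.1.1
      exact ⟨f, h1, h2⟩
    · apply Set.Subset.antisymm
      · intro x hx
        simp only [Set.mem_iInter]
        exact fun f hf => hf.2 x hx
      · intro x hx
        by_contra hxD
        obtain ⟨f, h1, h2, h3⟩ := exists_sep_clm hA hxD
        have := Set.mem_iInter₂.1 hx f ⟨h1, h2⟩
        exact absurd this (not_lt.2 h3)
  -- Reverse direction of the iff.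
  have hrev : ∀ L : Set (V →L[ℝ] ℝ), L.Nonempty → (∀ f ∈ L, ∀ x : V, gt x 0 → 0 < f x) →
      D = ⋂ f ∈ L, {x : V | 0 < f x} → ArchimedeanD gt D := by
    rintro L ⟨f₀, hf₀⟩ hLpos hLD
    have hmem : ∀ x, x ∈ D ↔ ∀ f ∈ L, 0 < f x := by
      intro x; rw [hLD]; simp [Set.mem_iInter]
    constructor
    · refine ⟨?_, ?_, ?_⟩
      · intro h0
        have := (hmem 0).1 h0 f₀ hf₀
        simp at this
      · intro x hx y hy l m hl hm hlm
        rw [hmem] at hx hy ⊢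
        intro f hf
        have h1 := hx f hf
        have h2 := hy f hf
        have : f (l • x + m • y) = l * f x + m * f y := by
          simp [map_add, map_smul]
        rw [this]
        rcases (by rcases lt_or_ge 0 l with h | h; exacts [Or.inl h, Or.inr (by linarith)] :
          0 < l ∨ 0 < m) with h | h
        · have : 0 ≤ m * f y := mul_nonneg hm h2.le
          nlinarith
        · have : 0 ≤ l * f x := mul_nonneg hl h1.le
          nlinarith
      · intro x hx
        exact (hmem x).2 fun f hf => hLpos f hf x hx
    · intro x hx
      rw [hmem] at hx
      push_neg at hx
      obtain ⟨f, hfL, hfx⟩ := hx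
      refine ⟨fun y => f y, ?_, ?_, ⟨‖f‖, ?_⟩, ?_, hfx⟩
      · intro y z; simp only [map_add]; exact le_rfl
      · intro y c _; simp only [map_smul, smul_eq_mul]
      · intro y; exact f.le_opNorm y
      · intro y hy; exact (hmem y).1 hy f hfL
  refine ⟨⟨fun hA => ?_, fun ⟨L, h1, h2, h3⟩ => hrev L h1 h2 h3⟩, fun hA => ?_⟩
  · obtain ⟨hne, heq⟩ := hmain hA
    exact ⟨S, hne, fun f hf => hf.1, heq⟩
  · refine ⟨(hmain hA).2, fun L hne hLpos hLD f hfL => ⟨hLpos f hfL, fun x hx => ?_⟩⟩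
    rw [hLD] at hx
    exact Set.mem_iInter₂.1 hx f hfL
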